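/- Let c ∈ C²(ℝᵈ × ℝᵈ), let (x,y), (x',y') belong to a c-monotone set S, and suppose ‖D²_{yx}c + I‖ ≤ ε on a convex product set containing these points, where the mixed second derivative is evaluated along segments joining them. Then 0 ≥ −(x−x')·(y−y') − ε |x−x'| |y−y'|; equivalently, (x−x')·(y−y') ≥ −ε|x−x'||y−y'|. -/

import Mathlib

open Set

/-- Mean value inequality: if `h` has derivative `h'` on `[0,1]` with
`|h' t - m| ≤ K`, then `|h 1 - h 0 - m| ≤ K`. -/
lemma mvt01_aux {h h' : ℝ → ℝ} {m K : ℝ}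
    (hd : ∀ t ∈ Icc (0 : ℝ) 1, HasDerivAt h (h' t) t)
    (hb : ∀ t ∈ Icc (0 : ℝ) 1, |h' t - m| ≤ K) :
    |h 1 - h 0 - m| ≤ K := by
  have key := norm_image_sub_le_of_norm_deriv_le_segment_01'
    (f := fun t => h t - m * t) (f' := fun t => h' t - m) (C := K)
    (fun t ht => (((hd t ht).sub (((hasDerivAt_id t).const_mul m).congr_deriv
      (by simp)))).hasDerivWithinAt)
    (fun t ht => hb t (Ico_subset_Icc_self ht))
  simp only [Real.norm_eq_abs, mul_one, mul_zero, sub_zero] at key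
  convert key using 2
  ring

/-- Quantitative `c`-monotonicity: if `(x,y)` and `(x',y')` are `c`-monotone
(i.e. `c(x,y) + c(x',y') ≤ c(x,y') + c(x',y)`) and the mixed Hessian
`D²_{yx}c` is `ε`-close to `−I` along the segments joining the points, then
`(x−x')·(y−y') ≥ −ε |x−x'| |y−y'|`. -/
theorem quantitative_c_monotonicity (d : ℕ)
    (c : EuclideanSpace ℝ (Fin d) × EuclideanSpace ℝ (Fin d) → ℝ)
    (hc : ContDiff ℝ 2 c) (ε : ℝ) (hε : 0 ≤ ε)
    (x x' y y' : EuclideanSpace ℝ (Fin d))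
    (hmon : c (x, y) + c (x', y') ≤ c (x, y') + c (x', y))
    (hbound : ∀ s ∈ Icc (0 : ℝ) 1, ∀ t ∈ Icc (0 : ℝ) 1,
      ∀ u v : EuclideanSpace ℝ (Fin d),
        |fderiv ℝ (fun y₀ : EuclideanSpace ℝ (Fin d) =>
            fderiv ℝ (fun x₀ : EuclideanSpace ℝ (Fin d) => c (x₀, y₀))
              (x' + s • (x - x'))) (y' + t • (y - y')) v u
          + (inner ℝ u v : ℝ)| ≤ ε * ‖u‖ * ‖v‖) :
    -(ε * ‖x - x'‖ * ‖y - y'‖) ≤ (inner ℝ (x - x') (y - y') : ℝ) := by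
  have hcd : Differentiable ℝ c := hc.differentiable (by norm_num)
  have hcd1 : ContDiff ℝ 1 (fderiv ℝ c) := hc.fderiv_right (le_refl 2)
  have hfd : Differentiable ℝ (fderiv ℝ c) := hcd1.differentiable one_ne_zero
  set u : EuclideanSpace ℝ (Fin d) := x - x' with hu
  set v : EuclideanSpace ℝ (Fin d) := y - y' with hv
  set E : ℝ := ε * ‖u‖ * ‖v‖ with hE
  -- derivative of slices in x
  have hslice : ∀ (p y₀ : EuclideanSpace ℝ (Fin d)),
      HasFDerivAt (fun x₀ => c (x₀, y₀))
      ((fderiv ℝ c (p, y₀)).comp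
        (ContinuousLinearMap.inl ℝ (EuclideanSpace ℝ (Fin d)) (EuclideanSpace ℝ (Fin d)))) p :=
    fun p y₀ => (hcd (p, y₀)).hasFDerivAt.comp p (hasFDerivAt_prodMk_left p y₀)
  -- the operator-valued map Φ p is differentiable in y₀
  have hΦdiff : ∀ p : EuclideanSpace ℝ (Fin d), Differentiable ℝ
      (fun y₀ : EuclideanSpace ℝ (Fin d) => fderiv ℝ (fun x₀ => c (x₀, y₀)) p) := by
    intro p
    have heq : (fun y₀ : EuclideanSpace ℝ (Fin d) => fderiv ℝ (fun x₀ => c (x₀, y₀)) p)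
        = fun y₀ : EuclideanSpace ℝ (Fin d) => (fderiv ℝ c (p, y₀)).comp
            (ContinuousLinearMap.inl ℝ (EuclideanSpace ℝ (Fin d)) (EuclideanSpace ℝ (Fin d))) :=
      funext fun y₀ => (hslice p y₀).fderiv
    rw [heq]
    exact Differentiable.clm_comp
      (hfd.comp ((differentiable_const p).prodMk differentiable_id))
      (differentiable_const _)
  -- inner derivative in t
  have hinner : ∀ (p : EuclideanSpace ℝ (Fin d)) (t : ℝ),
      HasDerivAt (fun t : ℝ => fderiv ℝ (fun x₀ => c (x₀, y' + t • v)) p u)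
        (fderiv ℝ (fun y₀ : EuclideanSpace ℝ (Fin d) =>
          fderiv ℝ (fun x₀ => c (x₀, y₀)) p) (y' + t • v) v u) t := by
    intro p t
    have hline : HasDerivAt (fun t : ℝ => y' + t • v) v t := by
      simpa using (((hasDerivAt_id t).smul_const v).const_add y')
    have hF := ((hΦdiff p (y' + t • v)).hasFDerivAt).comp_hasDerivAt t hline
    exact ((ContinuousLinearMap.apply ℝ ℝ u).hasFDerivAt).comp_hasDerivAt t hF
  -- outer derivative in s
  have houter : ∀ (y₀ : EuclideanSpace ℝ (Fin d)) (s : ℝ),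
      HasDerivAt (fun s : ℝ => c (x' + s • u, y₀))
        (fderiv ℝ (fun x₀ => c (x₀, y₀)) (x' + s • u) u) s := by
    intro y₀ s
    have hline : HasDerivAt (fun s : ℝ => x' + s • u) u s := by
      simpa using (((hasDerivAt_id s).smul_const u).const_add x')
    have h1 := (hslice (x' + s • u) y₀).comp_hasDerivAt s hline
    rwa [← (hslice (x' + s • u) y₀).fderiv] at h1
  -- inner mean value estimate
  have hinnerMVT : ∀ s ∈ Icc (0 : ℝ) 1,
      |(fderiv ℝ (fun x₀ => c (x₀, y' + (1:ℝ) • v)) (x' + s • u) u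
        - fderiv ℝ (fun x₀ => c (x₀, y' + (0:ℝ) • v)) (x' + s • u) u)
        - (-(inner ℝ u v : ℝ))| ≤ E := by
    intro s hs
    exact mvt01_aux (fun t _ => hinner (x' + s • u) t)
      (fun t ht => by
        rw [sub_neg_eq_add]
        exact hbound s hs t ht u v)
  -- outer mean value estimate
  have houterMVT :
      |((c (x' + (1:ℝ) • u, y' + (1:ℝ) • v) - c (x' + (1:ℝ) • u, y' + (0:ℝ) • v))
        - (c (x' + (0:ℝ) • u, y' + (1:ℝ) • v) - c (x' + (0:ℝ) • u, y' + (0:ℝ) • v)))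
        - (-(inner ℝ u v : ℝ))| ≤ E := by
    refine mvt01_aux (h := fun s => c (x' + s • u, y' + (1:ℝ) • v)
        - c (x' + s • u, y' + (0:ℝ) • v))
      (h' := fun s => fderiv ℝ (fun x₀ => c (x₀, y' + (1:ℝ) • v)) (x' + s • u) u
        - fderiv ℝ (fun x₀ => c (x₀, y' + (0:ℝ) • v)) (x' + s • u) u)
      (fun s _ => (houter (y' + (1:ℝ) • v) s).sub (houter (y' + (0:ℝ) • v) s))
      hinnerMVT
  have h1u : x' + (1:ℝ) • u = x := by rw [one_smul, hu]; abel
  have h0u : x' + (0:ℝ) • u = x' := by rw [zero_smul, add_zero]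
  have h1v : y' + (1:ℝ) • v = y := by rw [one_smul, hv]; abel
  have h0v : y' + (0:ℝ) • v = y' := by rw [zero_smul, add_zero]
  rw [h1u, h0u, h1v, h0v, abs_le] at houterMVT
  have hF : (c (x, y) - c (x, y')) - (c (x', y) - c (x', y')) ≤ 0 := by linarith
  have h2 := houterMVT.1
  linarith
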